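/- arXiv:1603.03372 — 7 statements merged into one kernel-verified Lean document; each statement's English description precedes it below -/
import Mathlib

section
/- Let n ≥ 1 and let X, X_d : ℝ → SO(n) be differentiable with Ẋ = XU and Ẋ_d = U_d X_d, where U(t), U_d(t) ∈ so(n) are continuous. Let X_r ∈ SO(n) be constant, let y_1^r, …, y_ν^r ∈ ℝⁿ be constant vectors, and set E_r(t) = X(t)ᵀ X_d(t) X_rᵀ and e_i(t) = y_i^r − E_r(t) y_i^r. Then for any continuous Δ : ℝ → so(n), writing Δ̃ = U_d − Δ, one has for all t: d/dt [ (1/2) Σ_{i=1}^{ν} ‖e_i(t)‖² ] = Σ_{i=1}^{ν} tr( (U − XᵀΔX)ᵀ P( e_i (y_i^r − e_i)ᵀ ) ) − Σ_{i=1}^{ν} tr( Δ̃ᵀ P( X e_i (y_i^r − e_i)ᵀ Xᵀ ) ). -/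
open Matrix

attribute [local instance] Matrix.frobeniusNormedAddCommGroup Matrix.frobeniusNormedSpace

attribute [local instance] Matrix.frobeniusNormedRing Matrix.frobeniusNormedAlgebra

set_option maxHeartbeats 1000000

noncomputable section

/-- The special orthogonal group `SO(n)` as a set of real `n × n` matrices. -/
def SOn (n : ℕ) : Set (Matrix (Fin n) (Fin n) ℝ) := {R | Rᵀ * R = 1 ∧ R.det = 1}

/-- Orthogonal projection of a square matrix onto the skew-symmetric matrices
(the Lie algebra `so(n)`) with respect to the trace inner product. -/
def skewProj {n : ℕ} (A : Matrix (Fin n) (Fin n) ℝ) : Matrix (Fin n) (Fin n) ℝ :=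
  (1 / 2 : ℝ) • (A - Aᵀ)

-- transpose as a continuous linear map
def transCLM (n : ℕ) : Matrix (Fin n) (Fin n) ℝ →L[ℝ] Matrix (Fin n) (Fin n) ℝ :=
  LinearMap.toContinuousLinearMap
    { toFun := fun M => Mᵀ
      map_add' := fun A B => Matrix.transpose_add A B
      map_smul' := fun c A => Matrix.transpose_smul c A }

-- mulVec by a family of constant vectors as a CLM
def mvCLM (n ν : ℕ) (yr : Fin ν → Fin n → ℝ) :
    Matrix (Fin n) (Fin n) ℝ →L[ℝ] (Fin ν → Fin n → ℝ) :=
  LinearMap.toContinuousLinearMap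
    { toFun := fun M i => M *ᵥ yr i
      map_add' := fun A B => by funext i; exact Matrix.add_mulVec A B (yr i)
      map_smul' := fun c A => by funext i; exact Matrix.smul_mulVec c A (yr i) }

lemma trace_skew_mul {n : ℕ} (S A : Matrix (Fin n) (Fin n) ℝ) (hS : Sᵀ = -S) :
    trace (Sᵀ * skewProj A) = trace (Sᵀ * A) := by
  have h1 : trace (Sᵀ * Aᵀ) = trace (A * S) := by
    rw [← Matrix.trace_transpose (Sᵀ * Aᵀ)]; simp [Matrix.transpose_mul]
  have h2 : trace (Sᵀ * A) = - trace (A * S) := by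
    rw [hS, Matrix.neg_mul, Matrix.trace_neg, Matrix.trace_mul_comm]
  rw [skewProj, Matrix.mul_smul, Matrix.trace_smul, Matrix.mul_sub, Matrix.trace_sub, h1, h2]
  simp [smul_eq_mul]; ring

lemma trace_mul_vecMulVec {n : ℕ} (A : Matrix (Fin n) (Fin n) ℝ) (v w : Fin n → ℝ) :
    trace (Aᵀ * vecMulVec v w) = v ⬝ᵥ (A *ᵥ w) := by
  simp only [Matrix.trace, Matrix.diag, Matrix.mul_apply, Matrix.vecMulVec_apply,
    Matrix.transpose_apply, dotProduct, Matrix.mulVec]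
  rw [Finset.sum_comm]
  refine Finset.sum_congr rfl fun k _ => ?_
  rw [Finset.mul_sum]
  exact Finset.sum_congr rfl fun j _ => by ring

lemma key {n : ℕ} (Xt Ut Udt Δt : Matrix (Fin n) (Fin n) ℝ) (ei w : Fin n → ℝ)
    (hU : Utᵀ = -Ut) (hUd : Udtᵀ = -Udt) (hΔ : Δtᵀ = -Δt) :
    trace ((Ut - Xtᵀ * Δt * Xt)ᵀ * skewProj (vecMulVec ei w)) -
      trace ((Udt - Δt)ᵀ * skewProj (Xt * vecMulVec ei w * Xtᵀ)) =
    ei ⬝ᵥ ((Ut - Xtᵀ * Udt * Xt) *ᵥ w) := by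
  have hA : (Ut - Xtᵀ * Δt * Xt)ᵀ = -(Ut - Xtᵀ * Δt * Xt) := by
    simp only [Matrix.transpose_sub, Matrix.transpose_mul, Matrix.transpose_transpose,
      hU, hΔ, Matrix.mul_neg, Matrix.neg_mul, Matrix.mul_assoc]
    abel
  have hB : (Udt - Δt)ᵀ = -(Udt - Δt) := by
    simp [hUd, hΔ]; abel
  rw [trace_skew_mul _ _ hA, trace_skew_mul _ _ hB]
  have h2 : trace ((Udt - Δt)ᵀ * (Xt * vecMulVec ei w * Xtᵀ)) =
      trace ((Xtᵀ * (Udt - Δt) * Xt)ᵀ * vecMulVec ei w) := by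
    rw [Matrix.transpose_mul, Matrix.transpose_mul, Matrix.transpose_transpose]
    rw [show (Udt - Δt)ᵀ * (Xt * vecMulVec ei w * Xtᵀ) =
      ((Udt - Δt)ᵀ * (Xt * vecMulVec ei w)) * Xtᵀ by noncomm_ring]
    rw [Matrix.trace_mul_comm]
    noncomm_ring
  rw [h2, trace_mul_vecMulVec, trace_mul_vecMulVec, ← dotProduct_sub, ← Matrix.sub_mulVec]
  congr 2
  have : Xtᵀ * (Udt - Δt) * Xt = Xtᵀ * Udt * Xt - Xtᵀ * Δt * Xt := by noncomm_ring
  rw [this]; abel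
/-- **Lyapunov derivative identity on `SO(n)`.**
With `Ẋ = XU`, `Ẋd = Ud Xd` evolving on `SO(n)`, `E_r = Xᵀ Xd Xrᵀ`,
`e_i = y_i^r − E_r y_i^r` and any skew-valued `Δ`, with `Δ̃ = Ud − Δ`:
`d/dt (½ Σ‖e_i‖²) = Σ tr((U − XᵀΔX)ᵀ P(e_i (y_i^r − e_i)ᵀ)) − Σ tr(Δ̃ᵀ P(X e_i (y_i^r − e_i)ᵀ Xᵀ))`. -/
theorem lyapunov_derivative_SOn
    (n ν : ℕ) (hn : 1 ≤ n)
    (X Xd : ℝ → Matrix (Fin n) (Fin n) ℝ)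
    (U Ud Δ : ℝ → Matrix (Fin n) (Fin n) ℝ)
    (Xr : Matrix (Fin n) (Fin n) ℝ)
    (yr : Fin ν → Fin n → ℝ)
    (hX : ∀ t, X t ∈ SOn n) (hXd : ∀ t, Xd t ∈ SOn n) (hXr : Xr ∈ SOn n)
    (hUskew : ∀ t, (U t)ᵀ = -(U t))
    (hUdskew : ∀ t, (Ud t)ᵀ = -(Ud t))
    (hΔskew : ∀ t, (Δ t)ᵀ = -(Δ t))
    (hUcont : Continuous U) (hUdcont : Continuous Ud) (hΔcont : Continuous Δ)
    (hXdot : ∀ t, HasDerivAt X (X t * U t) t)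
    (hXddot : ∀ t, HasDerivAt Xd (Ud t * Xd t) t)
    -- the group error and the output errors
    (Er : ℝ → Matrix (Fin n) (Fin n) ℝ)
    (hEr : ∀ t, Er t = (X t)ᵀ * Xd t * Xrᵀ)
    (e : Fin ν → ℝ → Fin n → ℝ)
    (he : ∀ i t, e i t = yr i - (Er t) *ᵥ yr i) :
    ∀ t, HasDerivAt (fun s => (1 / 2 : ℝ) * ∑ i, (e i s) ⬝ᵥ (e i s))
      ((∑ i, trace ((U t - (X t)ᵀ * Δ t * X t)ᵀ *
            skewProj (vecMulVec (e i t) (yr i - e i t)))) -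
       (∑ i, trace ((Ud t - Δ t)ᵀ *
            skewProj (X t * vecMulVec (e i t) (yr i - e i t) * (X t)ᵀ)))) t := by
  intro t
  -- derivative of Er
  set Er' : Matrix (Fin n) (Fin n) ℝ :=
    ((X t * U t)ᵀ * Xd t + (X t)ᵀ * (Ud t * Xd t)) * Xrᵀ with hEr'def
  have hXT : HasDerivAt (fun s => (X s)ᵀ) ((X t * U t)ᵀ) t := by
    have := (transCLM n).hasFDerivAt.comp_hasDerivAt t (hXdot t)
    exact this
  have hErdot : HasDerivAt Er Er' t := by
    have h2 := (hXT.mul (hXddot t)).mul (hasDerivAt_const t Xrᵀ)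
    simp only [mul_zero, add_zero] at h2
    have : Er = fun s => (X s)ᵀ * Xd s * Xrᵀ := funext hEr
    rw [this]
    exact h2
  -- derivative of e i · k
  have hedot : ∀ i k, HasDerivAt (fun s => e i s k) (-(Er' *ᵥ yr i) k) t := by
    intro i k
    have hv : HasDerivAt (fun s => mvCLM n ν yr (Er s)) (mvCLM n ν yr Er') t :=
      (mvCLM n ν yr).hasFDerivAt.comp_hasDerivAt t hErdot
    have hik := hasDerivAt_pi.1 (hasDerivAt_pi.1 hv i) k
    have : (fun s => e i s k) = fun s => yr i k - (mvCLM n ν yr (Er s)) i k := by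
      funext s
      simp [he i s, mvCLM]
    rw [this]
    simpa [mvCLM] using (hasDerivAt_const t (yr i k)).fun_sub hik
  -- derivative of the sum of squares
  have hf : HasDerivAt (fun s => (1 / 2 : ℝ) * ∑ i, (e i s) ⬝ᵥ (e i s))
      ((1 / 2 : ℝ) * ∑ i, ∑ k,
        ((-(Er' *ᵥ yr i) k) * e i t k + e i t k * (-(Er' *ᵥ yr i) k))) t := by
    have : (fun s => (1 / 2 : ℝ) * ∑ i, (e i s) ⬝ᵥ (e i s)) =
        fun s => (1 / 2 : ℝ) * ∑ i, ∑ k, e i s k * e i s k := by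
      funext s; simp [dotProduct]
    rw [this]
    exact (HasDerivAt.fun_sum fun i _ => HasDerivAt.fun_sum fun k _ =>
      (hedot i k).fun_mul (hedot i k)).const_mul _
  convert hf using 1
  -- identify the derivative values
  have hXXT : X t * (X t)ᵀ = 1 := mul_eq_one_comm.mp (hX t).1
  have hEr'eq : -Er' = (U t - (X t)ᵀ * Ud t * X t) * Er t := by
    rw [hEr'def, hEr t, Matrix.transpose_mul, hUskew t]
    have : (X t)ᵀ * Ud t * X t * ((X t)ᵀ * Xd t * Xrᵀ)
        = (X t)ᵀ * (Ud t * Xd t) * Xrᵀ := by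
      rw [show (X t)ᵀ * Ud t * X t * ((X t)ᵀ * Xd t * Xrᵀ)
          = (X t)ᵀ * Ud t * (X t * (X t)ᵀ) * Xd t * Xrᵀ by noncomm_ring, hXXT]
      noncomm_ring
    rw [Matrix.sub_mul, this]
    noncomm_ring
  have hkey : ∀ i : Fin ν,
      trace ((U t - (X t)ᵀ * Δ t * X t)ᵀ * skewProj (vecMulVec (e i t) (yr i - e i t))) -
      trace ((Ud t - Δ t)ᵀ * skewProj (X t * vecMulVec (e i t) (yr i - e i t) * (X t)ᵀ)) =
      (e i t) ⬝ᵥ (-(Er' *ᵥ yr i)) := by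
    intro i
    rw [key (X t) (U t) (Ud t) (Δ t) (e i t) (yr i - e i t)
      (hUskew t) (hUdskew t) (hΔskew t)]
    congr 1
    have hy : yr i - e i t = Er t *ᵥ yr i := by rw [he i t]; abel
    rw [hy, Matrix.mulVec_mulVec, ← hEr'eq, Matrix.neg_mulVec]
  calc (∑ i, trace ((U t - (X t)ᵀ * Δ t * X t)ᵀ *
            skewProj (vecMulVec (e i t) (yr i - e i t)))) -
       (∑ i, trace ((Ud t - Δ t)ᵀ *
            skewProj (X t * vecMulVec (e i t) (yr i - e i t) * (X t)ᵀ)))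
      = ∑ i, ((e i t) ⬝ᵥ (-(Er' *ᵥ yr i))) := by
        rw [← Finset.sum_sub_distrib]
        exact Finset.sum_congr rfl fun i _ => hkey i
    _ = (1 / 2 : ℝ) * ∑ i, ∑ k,
        ((-(Er' *ᵥ yr i) k) * e i t k + e i t k * (-(Er' *ᵥ yr i) k)) := by
        rw [Finset.mul_sum]
        refine Finset.sum_congr rfl fun i _ => ?_
        rw [Finset.mul_sum]
        simp only [dotProduct, Pi.neg_apply]
        refine Finset.sum_congr rfl fun k _ => by ring
end
end

section
/- Let A ∈ M₃(ℝ), let y_1, …, y_ν ∈ ℝ³, and set Y = Σ_{i=1}^{ν} y_i y_iᵀ. Then Σ_{i=1}^{ν} ( (A y_i) × y_i )_× = Y Aᵀ − A Y. In particular, Σ_{i=1}^{ν} (A y_i) × y_i = 0 if and only if A Y = Y Aᵀ. -/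
open Matrix

noncomputable section

def skew3 (v : Fin 3 → ℝ) : Matrix (Fin 3) (Fin 3) ℝ :=
  !![0, -v 2, v 1; v 2, 0, -v 0; -v 1, v 0, 0]

def cross3 (a b : Fin 3 → ℝ) : Fin 3 → ℝ :=
  ![a 1 * b 2 - a 2 * b 1, a 2 * b 0 - a 0 * b 2, a 0 * b 1 - a 1 * b 0]

lemma skew3_term (A : Matrix (Fin 3) (Fin 3) ℝ) (v : Fin 3 → ℝ) :
    skew3 (cross3 (A *ᵥ v) v) = vecMulVec v v * Aᵀ - A * vecMulVec v v := by
  ext i j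
  fin_cases i <;> fin_cases j <;>
    simp [skew3, cross3, mulVec, vecMulVec, mul_apply, dotProduct,
      Fin.sum_univ_three] <;> ring

lemma skew3_add (a b : Fin 3 → ℝ) : skew3 (a + b) = skew3 a + skew3 b := by
  ext i j; fin_cases i <;> fin_cases j <;> simp [skew3] <;> ring

lemma skew3_zero : skew3 (0 : Fin 3 → ℝ) = 0 := by
  ext i j; fin_cases i <;> fin_cases j <;> simp [skew3, vecHead, vecTail]

lemma skew3_eq_zero {v : Fin 3 → ℝ} (h : skew3 v = 0) : v = 0 := by
  funext i
  fin_cases i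
  · have := congrFun (congrFun h 2) 1; simpa [skew3] using this
  · have := congrFun (congrFun h 0) 2; simpa [skew3] using this
  · have := congrFun (congrFun h 1) 0; simpa [skew3] using this

/-- **Equilibrium characterization identity.**
For `A ∈ M₃(ℝ)` and `Y = Σ yᵢ yᵢᵀ`:
`Σᵢ ((A yᵢ) × yᵢ)_× = Y Aᵀ − A Y`, and hence
`Σᵢ (A yᵢ) × yᵢ = 0 ↔ A Y = Y Aᵀ`. -/
theorem sum_cross_skew_eq_YAt_sub_AY
    (ν : ℕ) (A : Matrix (Fin 3) (Fin 3) ℝ)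
    (y : Fin ν → Fin 3 → ℝ)
    (Y : Matrix (Fin 3) (Fin 3) ℝ)
    (hY : Y = ∑ i, vecMulVec (y i) (y i)) :
    (∑ i, skew3 (cross3 (A *ᵥ y i) (y i)) = Y * Aᵀ - A * Y) ∧
    ((∑ i, cross3 (A *ᵥ y i) (y i)) = 0 ↔ A * Y = Y * Aᵀ) := by
  have hmain : ∑ i, skew3 (cross3 (A *ᵥ y i) (y i)) = Y * Aᵀ - A * Y := by
    subst hY
    rw [Finset.sum_mul, Finset.mul_sum, ← Finset.sum_sub_distrib]
    exact Finset.sum_congr rfl fun i _ => skew3_term A (y i)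
  refine ⟨hmain, ?_⟩
  have hskew : skew3 (∑ i, cross3 (A *ᵥ y i) (y i))
      = ∑ i, skew3 (cross3 (A *ᵥ y i) (y i)) := by
    induction (Finset.univ : Finset (Fin ν)) using Finset.cons_induction with
    | empty => simpa using skew3_zero
    | cons a s ha ih => rw [Finset.sum_cons, Finset.sum_cons, skew3_add, ih]
  constructor
  · intro h
    have := hmain
    rw [← hskew, h, skew3_zero] at this
    have := this.symm
    rw [sub_eq_zero] at this
    exact this.symm
  · intro h
    apply skew3_eq_zero
    rw [hskew, hmain, h, sub_self]
end
end

section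
/- Let Y be a real symmetric 3×3 matrix with eigenvalues λ₁ < λ₂ < λ₃ and corresponding orthonormal eigenvectors u₁, u₂, u₃. Define R₂ = u₁u₁ᵀ − u₂u₂ᵀ − u₃u₃ᵀ, R₃ = −u₁u₁ᵀ + u₂u₂ᵀ − u₃u₃ᵀ, R₄ = −u₁u₁ᵀ − u₂u₂ᵀ + u₃u₃ᵀ, and for j = 2, 3, 4 set Υ_j = Y R_j − tr(Y R_j) I₃. Then Υ₂ has eigenvalues λ₂+λ₃, λ₃−λ₁, λ₂−λ₁; Υ₃ has eigenvalues λ₃−λ₂, λ₃+λ₁, λ₁−λ₂; and Υ₄ has eigenvalues λ₂−λ₃, λ₁−λ₃, λ₁+λ₂. -/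
open Matrix

noncomputable section

private lemma key_det (Y P : Matrix (Fin 3) (Fin 3) ℝ) (lam d : Fin 3 → ℝ)
    (hP : Pᵀ * P = 1) (hYP : Y * P = P * diagonal lam) (x : ℝ) :
    (Y * (P * diagonal d * Pᵀ) -
        (Y * (P * diagonal d * Pᵀ)).trace • (1 : Matrix (Fin 3) (Fin 3) ℝ) -
        x • (1 : Matrix (Fin 3) (Fin 3) ℝ)).det =
      (lam 0 * d 0 - (lam 0 * d 0 + lam 1 * d 1 + lam 2 * d 2) - x) *
      ((lam 1 * d 1 - (lam 0 * d 0 + lam 1 * d 1 + lam 2 * d 2) - x) *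
       (lam 2 * d 2 - (lam 0 * d 0 + lam 1 * d 1 + lam 2 * d 2) - x)) := by
  have hPPt : P * Pᵀ = 1 := mul_eq_one_comm.mp hP
  have hYR : Y * (P * diagonal d * Pᵀ) = P * diagonal (fun k => lam k * d k) * Pᵀ := by
    rw [← Matrix.mul_assoc, ← Matrix.mul_assoc, hYP, Matrix.mul_assoc P,
      diagonal_mul_diagonal]
  set t : ℝ := lam 0 * d 0 + lam 1 * d 1 + lam 2 * d 2 with ht
  clear_value t
  have htr : (Y * (P * diagonal d * Pᵀ)).trace = t := by
    rw [hYR, Matrix.trace_mul_cycle, hP, Matrix.one_mul,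
      Matrix.trace_diagonal, Fin.sum_univ_three, ← ht]
  have hM : Y * (P * diagonal d * Pᵀ) -
      (Y * (P * diagonal d * Pᵀ)).trace • (1 : Matrix (Fin 3) (Fin 3) ℝ) -
      x • (1 : Matrix (Fin 3) (Fin 3) ℝ) =
      P * diagonal (fun k => lam k * d k - t - x) * Pᵀ := by
    rw [htr, hYR]
    have hexp : (diagonal fun k => lam k * d k - t - x) =
        diagonal (fun k => lam k * d k) - (t + x) • (1 : Matrix (Fin 3) (Fin 3) ℝ) := by
      ext i j
      by_cases h : i = j <;>
        simp [diagonal, Matrix.one_apply, h, Matrix.sub_apply, Matrix.smul_apply] <;> ring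
    rw [hexp, Matrix.mul_sub, Matrix.sub_mul, Matrix.mul_smul, Matrix.smul_mul,
      Matrix.mul_one, hPPt, add_smul]
    abel
  have hdet : P.det * P.det = 1 := by
    have h := congrArg Matrix.det hP
    rwa [Matrix.det_mul, Matrix.det_transpose, Matrix.det_one] at h
  rw [hM, Matrix.det_mul, Matrix.det_mul, Matrix.det_transpose, mul_right_comm, hdet,
    one_mul, Matrix.det_diagonal, Fin.prod_univ_three, mul_assoc]

/-- **Eigenvalues of the linearization matrices `Υⱼ`.**
With `Y` symmetric with eigenvalues `λ₁ < λ₂ < λ₃`, orthonormal eigenvectors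
`u₁, u₂, u₃`, `Rⱼ` the three non-identity symmetric equilibria and
`Υⱼ = Y Rⱼ − tr(Y Rⱼ) I₃`, the characteristic polynomials factor as stated:
`Υ₂` has eigenvalues `λ₂+λ₃, λ₃−λ₁, λ₂−λ₁`, `Υ₃` has `λ₃−λ₂, λ₃+λ₁, λ₁−λ₂`,
and `Υ₄` has `λ₂−λ₃, λ₁−λ₃, λ₁+λ₂` (counted with multiplicity). -/
theorem upsilon_eigenvalues
    (Y : Matrix (Fin 3) (Fin 3) ℝ) (hYsymm : Yᵀ = Y)
    (lam : Fin 3 → ℝ) (u : Fin 3 → Fin 3 → ℝ)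
    (heig : ∀ i, Y *ᵥ u i = lam i • u i)
    (horth : ∀ i j, u i ⬝ᵥ u j = if i = j then 1 else 0)
    (hlt01 : lam 0 < lam 1) (hlt12 : lam 1 < lam 2)
    (R2 R3 R4 U2 U3 U4 : Matrix (Fin 3) (Fin 3) ℝ)
    (hR2 : R2 = vecMulVec (u 0) (u 0) - vecMulVec (u 1) (u 1) - vecMulVec (u 2) (u 2))
    (hR3 : R3 = -vecMulVec (u 0) (u 0) + vecMulVec (u 1) (u 1) - vecMulVec (u 2) (u 2))
    (hR4 : R4 = -vecMulVec (u 0) (u 0) - vecMulVec (u 1) (u 1) + vecMulVec (u 2) (u 2))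
    (hU2 : U2 = Y * R2 - (Y * R2).trace • (1 : Matrix (Fin 3) (Fin 3) ℝ))
    (hU3 : U3 = Y * R3 - (Y * R3).trace • (1 : Matrix (Fin 3) (Fin 3) ℝ))
    (hU4 : U4 = Y * R4 - (Y * R4).trace • (1 : Matrix (Fin 3) (Fin 3) ℝ)) :
    (∀ x : ℝ, (U2 - x • (1 : Matrix (Fin 3) (Fin 3) ℝ)).det =
      -((x - (lam 1 + lam 2)) * (x - (lam 2 - lam 0)) * (x - (lam 1 - lam 0)))) ∧
    (∀ x : ℝ, (U3 - x • (1 : Matrix (Fin 3) (Fin 3) ℝ)).det =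
      -((x - (lam 2 - lam 1)) * (x - (lam 2 + lam 0)) * (x - (lam 0 - lam 1)))) ∧
    (∀ x : ℝ, (U4 - x • (1 : Matrix (Fin 3) (Fin 3) ℝ)).det =
      -((x - (lam 1 - lam 2)) * (x - (lam 0 - lam 2)) * (x - (lam 0 + lam 1)))) := by
  set P : Matrix (Fin 3) (Fin 3) ℝ := Matrix.of (fun i j => u j i) with hPdef
  have hP : Pᵀ * P = 1 := by
    ext i j
    have := horth i j
    simp only [dotProduct] at this
    simp [Matrix.mul_apply, Matrix.one_apply, hPdef, Matrix.transpose_apply, this]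
  have hYP : Y * P = P * diagonal lam := by
    ext i j
    have := congrFun (heig j) i
    simp only [Matrix.mulVec, dotProduct, Pi.smul_apply, smul_eq_mul] at this
    simp [Matrix.mul_apply, hPdef, diagonal, Finset.sum_ite_eq, this, mul_comm]
  have hRconj : ∀ d : Fin 3 → ℝ,
      P * diagonal d * Pᵀ = d 0 • vecMulVec (u 0) (u 0) + d 1 • vecMulVec (u 1) (u 1)
        + d 2 • vecMulVec (u 2) (u 2) := by
    intro d
    ext i j
    simp [Matrix.mul_apply, diagonal, hPdef, Fin.sum_univ_three, vecMulVec_apply,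
      Matrix.add_apply, Matrix.smul_apply, Finset.sum_ite_eq]
    ring
  refine ⟨fun x => ?_, fun x => ?_, fun x => ?_⟩
  · have hr : R2 = P * diagonal ![1, -1, -1] * Pᵀ := by
      rw [hRconj, hR2]; ext i j; simp [Matrix.sub_apply, Matrix.add_apply]; ring
    rw [hU2, hr, key_det Y P lam ![1, -1, -1] hP hYP x]
    norm_num [show (![1, -1, -1] : Fin 3 → ℝ) 2 = -1 from rfl]; ring
  · have hr : R3 = P * diagonal ![-1, 1, -1] * Pᵀ := by
      rw [hRconj, hR3]; ext i j; simp [Matrix.sub_apply, Matrix.add_apply]; ring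
    rw [hU3, hr, key_det Y P lam ![-1, 1, -1] hP hYP x]
    norm_num [show (![-1, 1, -1] : Fin 3 → ℝ) 2 = -1 from rfl]; ring
  · have hr : R4 = P * diagonal ![-1, -1, 1] * Pᵀ := by
      rw [hRconj, hR4]; ext i j; simp [Matrix.sub_apply, Matrix.add_apply]; ring
    rw [hU4, hr, key_det Y P lam ![-1, -1, 1] hP hYP x]
    norm_num [show (![-1, -1, 1] : Fin 3 → ℝ) 2 = 1 from rfl]; ring
end
end

section
/- Let Y be a real symmetric positive semidefinite 3×3 matrix with eigenvalues 0 ≤ λ₁ < λ₂ < λ₃ and corresponding orthonormal eigenvectors u₁, u₂, u₃. Define R₂ = u₁u₁ᵀ − u₂u₂ᵀ − u₃u₃ᵀ, R₃ = −u₁u₁ᵀ + u₂u₂ᵀ − u₃u₃ᵀ, R₄ = −u₁u₁ᵀ − u₂u₂ᵀ + u₃u₃ᵀ, and for j = 2, 3, 4 set Υ_j = Y R_j − tr(Y R_j) I₃. Then each Υ_j (j = 2, 3, 4) is invertible and has at least one strictly positive eigenvalue. -/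
open Matrix

noncomputable section

lemma myMulVecMulVec (A : Matrix (Fin 3) (Fin 3) ℝ) (b c : Fin 3 → ℝ) :
    A * vecMulVec b c = vecMulVec (A *ᵥ b) c := by
  ext i j
  simp [mul_apply, vecMulVec_apply, mulVec, dotProduct, Finset.sum_mul, mul_assoc]

lemma myVecMulVecMul (a b c d : Fin 3 → ℝ) :
    vecMulVec a b * vecMulVec c d = (b ⬝ᵥ c) • vecMulVec a d := by
  ext i j
  simp [mul_apply, vecMulVec_apply, dotProduct, Finset.mul_sum, Finset.sum_mul]
  ring_nf
  apply Finset.sum_congr rfl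
  intros; ring

lemma myVecMulVecMulVec (a b x : Fin 3 → ℝ) :
    vecMulVec a b *ᵥ x = (b ⬝ᵥ x) • a := by
  ext i
  simp [mulVec, vecMulVec_apply, dotProduct, Finset.mul_sum, Finset.sum_mul]
  apply Finset.sum_congr rfl
  intros; ring

lemma myTraceVecMulVec (a b : Fin 3 → ℝ) : (vecMulVec a b).trace = a ⬝ᵥ b := by
  simp [trace, diag, vecMulVec_apply, dotProduct]

lemma mySumProj (u : Fin 3 → Fin 3 → ℝ)
    (horth : ∀ i j, u i ⬝ᵥ u j = if i = j then 1 else 0) :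
    vecMulVec (u 0) (u 0) + vecMulVec (u 1) (u 1) + vecMulVec (u 2) (u 2) = 1 := by
  have h : (Matrix.of u) * (Matrix.of u)ᵀ = 1 := by
    ext i j
    have := horth i j
    simpa [mul_apply, dotProduct, one_apply] using this
  have h2 : (Matrix.of u)ᵀ * (Matrix.of u) = 1 := mul_eq_one_comm.mp h
  ext i j
  have := congrFun (congrFun h2 i) j
  simp [mul_apply, Fin.sum_univ_three] at this
  simpa [vecMulVec_apply] using this

lemma myIsUnit (u : Fin 3 → Fin 3 → ℝ)
    (horth : ∀ i j, u i ⬝ᵥ u j = if i = j then 1 else 0)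
    (a b c : ℝ) (ha : a ≠ 0) (hb : b ≠ 0) (hc : c ≠ 0) :
    IsUnit (a • vecMulVec (u 0) (u 0) + b • vecMulVec (u 1) (u 1)
      + c • vecMulVec (u 2) (u 2)) := by
  set P0 := vecMulVec (u 0) (u 0)
  set P1 := vecMulVec (u 1) (u 1)
  set P2 := vecMulVec (u 2) (u 2)
  have hP : ∀ k l : Fin 3, vecMulVec (u k) (u k) * vecMulVec (u l) (u l)
      = if k = l then vecMulVec (u k) (u k) else 0 := by
    intro k l
    rw [myVecMulVecMul, horth]
    split <;> simp_all
  have h00 : P0 * P0 = P0 := by simpa using hP 0 0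
  have h11 : P1 * P1 = P1 := by simpa using hP 1 1
  have h22 : P2 * P2 = P2 := by simpa using hP 2 2
  have h01 : P0 * P1 = 0 := by simpa using hP 0 1
  have h02 : P0 * P2 = 0 := by simpa using hP 0 2
  have h10 : P1 * P0 = 0 := by simpa using hP 1 0
  have h12 : P1 * P2 = 0 := by simpa using hP 1 2
  have h20 : P2 * P0 = 0 := by simpa using hP 2 0
  have h21 : P2 * P1 = 0 := by simpa using hP 2 1
  have hsum : P0 + P1 + P2 = 1 := mySumProj u horth
  refine isUnit_iff_exists.mpr ⟨a⁻¹ • P0 + b⁻¹ • P1 + c⁻¹ • P2, ?_, ?_⟩ <;>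
  · simp only [add_mul, mul_add, Matrix.smul_mul, Matrix.mul_smul,
      h00, h11, h22, h01, h02, h10, h12, h20, h21, smul_zero, add_zero, zero_add,
      smul_smul]
    simp only [inv_mul_cancel₀ ha, mul_inv_cancel₀ ha, inv_mul_cancel₀ hb,
      mul_inv_cancel₀ hb, inv_mul_cancel₀ hc, mul_inv_cancel₀ hc, one_smul]
    exact hsum

/-- **Invertibility and a positive eigenvalue of the linearization matrices `Υⱼ`.**
With `Y` symmetric positive semidefinite with eigenvalues `0 ≤ λ₁ < λ₂ < λ₃`,
orthonormal eigenvectors `u₁, u₂, u₃`, and `Υⱼ = Y Rⱼ − tr(Y Rⱼ) I₃` for the three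
non-identity equilibria `Rⱼ`, each `Υⱼ` is invertible and has at least one strictly
positive (real) eigenvalue. -/
theorem upsilon_invertible_and_positive_eigenvalue
    (Y : Matrix (Fin 3) (Fin 3) ℝ) (hYsymm : Yᵀ = Y)
    (lam : Fin 3 → ℝ) (u : Fin 3 → Fin 3 → ℝ)
    (heig : ∀ i, Y *ᵥ u i = lam i • u i)
    (horth : ∀ i j, u i ⬝ᵥ u j = if i = j then 1 else 0)
    (hpos : 0 ≤ lam 0) (hlt01 : lam 0 < lam 1) (hlt12 : lam 1 < lam 2)
    (R2 R3 R4 U2 U3 U4 : Matrix (Fin 3) (Fin 3) ℝ)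
    (hR2 : R2 = vecMulVec (u 0) (u 0) - vecMulVec (u 1) (u 1) - vecMulVec (u 2) (u 2))
    (hR3 : R3 = -vecMulVec (u 0) (u 0) + vecMulVec (u 1) (u 1) - vecMulVec (u 2) (u 2))
    (hR4 : R4 = -vecMulVec (u 0) (u 0) - vecMulVec (u 1) (u 1) + vecMulVec (u 2) (u 2))
    (hU2 : U2 = Y * R2 - (Y * R2).trace • (1 : Matrix (Fin 3) (Fin 3) ℝ))
    (hU3 : U3 = Y * R3 - (Y * R3).trace • (1 : Matrix (Fin 3) (Fin 3) ℝ))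
    (hU4 : U4 = Y * R4 - (Y * R4).trace • (1 : Matrix (Fin 3) (Fin 3) ℝ)) :
    ∀ U ∈ ({U2, U3, U4} : Set (Matrix (Fin 3) (Fin 3) ℝ)),
      IsUnit U ∧ ∃ μ : ℝ, 0 < μ ∧ ∃ v : Fin 3 → ℝ, v ≠ 0 ∧ U *ᵥ v = μ • v := by
  have hYP : ∀ k, Y * vecMulVec (u k) (u k) = lam k • vecMulVec (u k) (u k) := by
    intro k
    rw [myMulVecMulVec, heig k]
    ext i j
    simp [vecMulVec_apply]
    ring
  have htr : ∀ k : Fin 3, (vecMulVec (u k) (u k)).trace = 1 := by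
    intro k
    rw [myTraceVecMulVec, horth]
    simp
  have hsum := mySumProj u horth
  have hu0 : u 0 ≠ 0 := by
    intro h0
    simpa [h0, dotProduct] using horth 0 0
  have hu2 : u 2 ≠ 0 := by
    intro h0
    simpa [h0, dotProduct] using horth 2 2
  have hmv : ∀ k l : Fin 3, vecMulVec (u k) (u k) *ᵥ u l
      = if k = l then u k else 0 := by
    intro k l
    rw [myVecMulVecMulVec, horth]
    split <;> simp
  intro U hU
  simp only [Set.mem_insert_iff, Set.mem_singleton_iff] at hU
  rcases hU with h | h | h
  · -- U = U2
    have hdecomp : U2 = (lam 1 + lam 2) • vecMulVec (u 0) (u 0)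
        + (lam 2 - lam 0) • vecMulVec (u 1) (u 1)
        + (lam 1 - lam 0) • vecMulVec (u 2) (u 2) := by
      rw [hU2, hR2, mul_sub, mul_sub, hYP 0, hYP 1, hYP 2]
      rw [trace_sub, trace_sub, trace_smul, trace_smul, trace_smul, htr 0, htr 1, htr 2]
      rw [← hsum]
      simp only [smul_eq_mul, mul_one]
      module
    subst h
    refine ⟨hdecomp ▸ myIsUnit u horth _ _ _ (by linarith) (by linarith) (by linarith),
      lam 1 + lam 2, by linarith, u 0, hu0, ?_⟩
    rw [hdecomp]
    simp only [add_mulVec, smul_mulVec, hmv]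
    simp
  · -- U = U3
    have hdecomp : U3 = (lam 2 - lam 1) • vecMulVec (u 0) (u 0)
        + (lam 0 + lam 2) • vecMulVec (u 1) (u 1)
        + (lam 0 - lam 1) • vecMulVec (u 2) (u 2) := by
      rw [hU3, hR3, mul_sub, mul_add, Matrix.mul_neg, hYP 0, hYP 1, hYP 2]
      rw [trace_sub, trace_add, trace_neg, trace_smul, trace_smul, trace_smul,
        htr 0, htr 1, htr 2]
      rw [← hsum]
      simp only [smul_eq_mul, mul_one]
      module
    subst h
    refine ⟨hdecomp ▸ myIsUnit u horth _ _ _ (by linarith) (by linarith) (by linarith),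
      lam 2 - lam 1, by linarith, u 0, hu0, ?_⟩
    rw [hdecomp]
    simp only [add_mulVec, smul_mulVec, hmv]
    simp
  · -- U = U4
    have hdecomp : U4 = (lam 1 - lam 2) • vecMulVec (u 0) (u 0)
        + (lam 0 - lam 2) • vecMulVec (u 1) (u 1)
        + (lam 0 + lam 1) • vecMulVec (u 2) (u 2) := by
      rw [hU4, hR4]
      simp only [mul_add, mul_sub, Matrix.mul_neg, hYP 0, hYP 1, hYP 2,
        trace_add, trace_sub, trace_neg, trace_smul, htr 0, htr 1, htr 2]
      rw [← hsum]
      simp only [smul_eq_mul, mul_one]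
      module
    subst h
    refine ⟨hdecomp ▸ myIsUnit u horth _ _ _ (by linarith) (by linarith) (by linarith),
      lam 0 + lam 1, by linarith, u 2, hu2, ?_⟩
    rw [hdecomp]
    simp only [add_mulVec, smul_mulVec, hmv]
    simp
end
end

section
/- Let Υ ∈ M₃(ℝ) be symmetric, let k_p, k_I > 0, let V : ℝ → SO(3) be continuous, and let x, θ : ℝ → ℝ³ be differentiable functions satisfying the linear time-varying system ẋ(t) = Υ x(t) + V(t)ᵀ θ(t), θ̇(t) = 2 (k_I/k_p) V(t) Υ x(t). Then the Chetaev function V(x, θ) = (k_I/(2 k_p)) xᵀ Υ x − (1/4) ‖θ‖² satisfies, along the solution, d/dt V(x(t), θ(t)) = (k_I/k_p) ‖Υ x(t)‖² ≥ 0 for all t. -/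
open Matrix

noncomputable section

def SO3 : Set (Matrix (Fin 3) (Fin 3) ℝ) := {R | Rᵀ * R = 1 ∧ R.det = 1}

private lemma hasDerivAt_dot {f g : ℝ → Fin 3 → ℝ} {f' g' : Fin 3 → ℝ} {t : ℝ}
    (hf : HasDerivAt f f' t) (hg : HasDerivAt g g' t) :
    HasDerivAt (fun s => f s ⬝ᵥ g s) (f' ⬝ᵥ g t + f t ⬝ᵥ g') t := by
  have hf' := hasDerivAt_pi.mp hf
  have hg' := hasDerivAt_pi.mp hg
  simp only [dotProduct]
  rw [← Finset.sum_add_distrib]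
  exact HasDerivAt.fun_sum fun i _ => (hf' i).mul (hg' i)

private lemma hasDerivAt_mulVec {f : ℝ → Fin 3 → ℝ} {f' : Fin 3 → ℝ} {t : ℝ}
    (A : Matrix (Fin 3) (Fin 3) ℝ) (hf : HasDerivAt f f' t) :
    HasDerivAt (fun s => A *ᵥ f s) (A *ᵥ f') t := by
  have hf' := hasDerivAt_pi.mp hf
  refine hasDerivAt_pi.mpr fun i => ?_
  simp only [mulVec, dotProduct]
  exact HasDerivAt.fun_sum fun j _ => (hf' j).const_mul (A i j)

/-- **Derivative of the Chetaev function along the linearized dynamics.**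
For `ẋ = Υx + Vᵀθ`, `θ̇ = 2(k_I/k_p) V Υ x` with `Υ` symmetric and `V(t) ∈ SO(3)`,
the Chetaev function `𝒱(x,θ) = (k_I/(2k_p)) xᵀΥx − ¼‖θ‖²` satisfies
`d/dt 𝒱(x(t),θ(t)) = (k_I/k_p)‖Υx(t)‖² ≥ 0`. -/
theorem chetaev_function_derivative
    (Υ : Matrix (Fin 3) (Fin 3) ℝ) (hΥ : Υᵀ = Υ)
    (kp kI : ℝ) (hkp : 0 < kp) (hkI : 0 < kI)
    (V : ℝ → Matrix (Fin 3) (Fin 3) ℝ)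
    (hV : ∀ t, V t ∈ SO3) (hVcont : Continuous V)
    (x θ : ℝ → Fin 3 → ℝ)
    (hx : ∀ t, HasDerivAt x (Υ *ᵥ x t + (V t)ᵀ *ᵥ θ t) t)
    (hθ : ∀ t, HasDerivAt θ ((2 * (kI / kp)) • (V t *ᵥ (Υ *ᵥ x t))) t) :
    ∀ t, HasDerivAt
        (fun s => (kI / (2 * kp)) * (x s ⬝ᵥ (Υ *ᵥ x s)) - (1 / 4) * (θ s ⬝ᵥ θ s))
        ((kI / kp) * ((Υ *ᵥ x t) ⬝ᵥ (Υ *ᵥ x t))) t ∧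
      0 ≤ (kI / kp) * ((Υ *ᵥ x t) ⬝ᵥ (Υ *ᵥ x t)) := by
  intro t
  set A := Υ *ᵥ x t with hA
  set x' := Υ *ᵥ x t + (V t)ᵀ *ᵥ θ t with hx'
  set θ' := (2 * (kI / kp)) • (V t *ᵥ (Υ *ᵥ x t)) with hθ'
  constructor
  · have h1 : HasDerivAt (fun s => x s ⬝ᵥ (Υ *ᵥ x s)) (x' ⬝ᵥ A + x t ⬝ᵥ (Υ *ᵥ x')) t :=
      hasDerivAt_dot (hx t) (hasDerivAt_mulVec Υ (hx t))
    have h2 : HasDerivAt (fun s => θ s ⬝ᵥ θ s) (θ' ⬝ᵥ θ t + θ t ⬝ᵥ θ') t :=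
      hasDerivAt_dot (hθ t) (hθ t)
    have h := (h1.const_mul (kI / (2 * kp))).sub (h2.const_mul (1 / 4 : ℝ))
    refine h.congr_deriv ?_
    have e1 : x t ⬝ᵥ (Υ *ᵥ x') = A ⬝ᵥ x' := by
      rw [dotProduct_mulVec, ← hΥ, vecMul_transpose]
    have e2 : ((V t)ᵀ *ᵥ θ t) ⬝ᵥ A = θ t ⬝ᵥ (V t *ᵥ A) := by
      rw [mulVec_transpose, ← dotProduct_mulVec]
    have e3 : θ' ⬝ᵥ θ t = θ t ⬝ᵥ θ' := dotProduct_comm _ _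
    have e4 : A ⬝ᵥ ((V t)ᵀ *ᵥ θ t) = θ t ⬝ᵥ (V t *ᵥ A) := by
      rw [dotProduct_comm]; exact e2
    rw [e1, e3, hθ', hx']
    simp only [dotProduct_add, add_dotProduct, smul_dotProduct, dotProduct_smul, e2, e4,
      smul_eq_mul, hA, mulVec_mulVec]
    rw [dotProduct_comm (Υ *ᵥ x t) ((V t)ᵀ *ᵥ θ t), mulVec_transpose, ← dotProduct_mulVec, mulVec_mulVec]
    field_simp
    ring
  · have : (0:ℝ) ≤ A ⬝ᵥ A := by
      have := dotProduct_self_star_nonneg A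
      simpa using this
    positivity
end
end

section
/- Let Υ ∈ M₃(ℝ) be symmetric and invertible with at least one strictly positive eigenvalue, let k_p, k_I > 0, and let V : ℝ → SO(3) be continuous. Then the origin of the linear time-varying system ẋ = Υ x + V(t)ᵀ θ, θ̇ = 2 (k_I/k_p) V(t) Υ x is unstable: there exists ε > 0 such that for every δ > 0 there exist a differentiable solution (x, θ) : [0, ∞) → ℝ³ × ℝ³ with ‖(x(0), θ(0))‖ < δ and a time T > 0 with ‖(x(T), θ(T))‖ ≥ ε. -/
open Matrix

noncomputable section

section OdeAux
open Set intervalIntegral MeasureTheory Function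
set_option maxHeartbeats 1000000

lemma abs_int_pow (t : ℝ) (m : ℕ) : |∫ s in (0:ℝ)..t, |s|^m| ≤ |t|^(m+1)/(m+1) := by
  rcases le_total 0 t with h | h
  · have e : ∫ s in (0:ℝ)..t, |s|^m = ∫ s in (0:ℝ)..t, s^m := by
      apply intervalIntegral.integral_congr
      intro s hs
      rw [Set.uIcc_of_le h] at hs
      simp only [abs_of_nonneg hs.1]
    rw [e, integral_pow, abs_of_nonneg h, zero_pow (Nat.succ_ne_zero m), sub_zero]
    exact le_of_eq (abs_of_nonneg (by positivity))
  · have h1 : ∫ s in (0:ℝ)..t, |s|^m = -∫ s in t..(0:ℝ), |s|^m := by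
      rw [intervalIntegral.integral_symm]
    have h2 : ∫ s in t..(0:ℝ), |s|^m = ∫ s in t..(0:ℝ), (-s)^m := by
      apply intervalIntegral.integral_congr
      intro s hs
      rw [Set.uIcc_of_le h] at hs
      simp only [abs_of_nonpos hs.2]
    have h3 : ∫ s in t..(0:ℝ), (-s)^m = ∫ s in (-(0:ℝ))..(-t), s^m :=
      intervalIntegral.integral_comp_neg (fun x => x^m)
    rw [h1, abs_neg, h2, h3, neg_zero, integral_pow, zero_pow (Nat.succ_ne_zero m), sub_zero,
      abs_of_nonpos h]
    have hnt : (0:ℝ) ≤ -t := by linarith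
    exact le_of_eq (abs_of_nonneg (by positivity))


lemma picard_Icc {E : Type*} [NormedAddCommGroup E] [NormedSpace ℝ E] [CompleteSpace E]
    (f : ℝ → E → E) (hf : Continuous fun p : ℝ × E => f p.1 p.2)
    (K : NNReal) (hlip : ∀ t, LipschitzWith K (f t)) (y0 : E)
    (a b : ℝ) (ha : a ≤ 0) (hb : 0 ≤ b) :
    ∃ y : C(Set.Icc a b, E),
      (∀ t : Set.Icc a b,
        y t = y0 + ∫ s in (0:ℝ)..(t:ℝ), f s (y (Set.projIcc a b (ha.trans hb) s))) ∧
      (∀ z : C(Set.Icc a b, E),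
        (∀ t : Set.Icc a b,
          z t = y0 + ∫ s in (0:ℝ)..(t:ℝ), f s (z (Set.projIcc a b (ha.trans hb) s))) → z = y) := by
  have hab : a ≤ b := ha.trans hb
  set proj : ℝ → Set.Icc a b := Set.projIcc a b hab with hproj
  -- the integrand associated to a continuous candidate
  have hgcont : ∀ y : C(Set.Icc a b, E), Continuous fun s : ℝ => f s (y (proj s)) := by
    intro y
    exact hf.comp (continuous_id.prodMk (y.continuous.comp (continuous_projIcc)))
  -- Picard map
  set Φ : C(Set.Icc a b, E) → C(Set.Icc a b, E) := fun y =>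
    ⟨fun t => y0 + ∫ s in (0:ℝ)..(t:ℝ), f s (y (proj s)),
      by
        refine continuous_const.add ?_
        exact (intervalIntegral.continuous_primitive
          (fun c d => ((hgcont y).intervalIntegrable c d) ) 0).comp continuous_subtype_val⟩
    with hΦ
  have hΦapply : ∀ y t, Φ y t = y0 + ∫ s in (0:ℝ)..(t:ℝ), f s (y (proj s)) := fun y t => rfl
  -- membership facts
  have hmem : ∀ (t : Set.Icc a b) (s : ℝ), s ∈ Set.uIoc 0 (t:ℝ) → s ∈ Set.Icc a b := by
    rintro ⟨t, ht⟩ s hs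
    rcases hs with ⟨h1, h2⟩
    constructor
    · exact le_of_lt (lt_of_le_of_lt (le_min ha ht.1) h1)
    · exact le_trans h2 (max_le hb ht.2)
  have hprojmem : ∀ (t : Set.Icc a b) (s : ℝ), s ∈ Set.uIoc 0 (t:ℝ) → ((proj s : Set.Icc a b) : ℝ) = s := by
    intro t s hs
    exact congrArg Subtype.val (Set.projIcc_of_mem hab (hmem t s hs))

  -- key iterate estimate
  have key : ∀ (m : ℕ) (y z : C(Set.Icc a b, E)) (t : Set.Icc a b),
      ‖Φ^[m] y t - Φ^[m] z t‖ ≤ dist y z * ((K:ℝ) * |(t:ℝ)|)^m / m.factorial := by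
    intro m
    induction m with
    | zero =>
      intro y z t
      simp only [Function.iterate_zero, id_eq, pow_zero, Nat.factorial_zero, Nat.cast_one,
        mul_one, div_one]
      rw [← dist_eq_norm]
      exact ContinuousMap.dist_apply_le_dist t
    | succ m ih =>
      intro y z t
      rw [Function.iterate_succ_apply', Function.iterate_succ_apply']
      set u := Φ^[m] y with hu
      set v := Φ^[m] z with hv
      have hint1 : IntervalIntegrable (fun s => f s (u (proj s))) volume 0 (t:ℝ) :=
        (hgcont u).intervalIntegrable _ _
      have hint2 : IntervalIntegrable (fun s => f s (v (proj s))) volume 0 (t:ℝ) :=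
        (hgcont v).intervalIntegrable _ _
      have hsub : Φ u t - Φ v t
          = ∫ s in (0:ℝ)..(t:ℝ), (f s (u (proj s)) - f s (v (proj s))) := by
        rw [hΦapply, hΦapply, intervalIntegral.integral_sub hint1 hint2]
        abel
      rw [hsub]
      set C : ℝ := dist y z * (K:ℝ)^(m+1) / m.factorial with hC
      have hCnonneg : 0 ≤ C := by positivity
      have hb1 : ∀ s ∈ Set.uIoc 0 (t:ℝ),
          ‖f s (u (proj s)) - f s (v (proj s))‖ ≤ C * |s|^m := by
        intro s hs
        have hl := (hlip s).dist_le_mul (u (proj s)) (v (proj s))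
        simp only [dist_eq_norm] at hl
        have h2 := ih y z (proj s)
        rw [hprojmem t s hs] at h2
        calc ‖f s (u (proj s)) - f s (v (proj s))‖ ≤ (K:ℝ) * ‖u (proj s) - v (proj s)‖ := hl
          _ ≤ (K:ℝ) * (dist y z * ((K:ℝ) * |s|)^m / m.factorial) := by
              exact mul_le_mul_of_nonneg_left h2 K.2
          _ = C * |s|^m := by rw [hC, mul_pow]; ring
      have hbd : ‖∫ s in (0:ℝ)..(t:ℝ), (f s (u (proj s)) - f s (v (proj s)))‖
          ≤ |∫ s in (0:ℝ)..(t:ℝ), C * |s|^m| := by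
        apply intervalIntegral.norm_integral_le_abs_of_norm_le
        · exact (MeasureTheory.ae_restrict_of_forall_mem measurableSet_uIoc hb1)
        · exact (Continuous.intervalIntegrable (continuous_const.mul (continuous_abs.pow m)) _ _)
      refine hbd.trans ?_
      have habs : |∫ s in (0:ℝ)..(t:ℝ), C * |s|^m| ≤ C * (|(t:ℝ)|^(m+1)/(m+1)) := by
        rw [intervalIntegral.integral_const_mul, abs_mul, abs_of_nonneg hCnonneg]
        exact mul_le_mul_of_nonneg_left (abs_int_pow _ _) hCnonneg
      refine habs.trans (le_of_eq ?_)
      rw [hC, mul_pow, Nat.factorial_succ]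
      have hfm : (0:ℝ) < m.factorial := by exact_mod_cast m.factorial_pos
      push_cast
      field_simp
  -- contraction of some iterate
  set R : ℝ := max |a| |b| with hR
  have hRt : ∀ t : Set.Icc a b, |(t:ℝ)| ≤ R := by
    rintro ⟨t, ht⟩
    rcases le_total 0 t with h | h
    · exact le_max_of_le_right (by rw [abs_of_nonneg h]; exact le_trans ht.2 (le_abs_self b))
    · refine le_max_of_le_left ?_
      rw [abs_of_nonpos h]
      exact le_trans (neg_le_neg ht.1) (neg_le_abs a)
  have hR0 : 0 ≤ R := le_trans (abs_nonneg a) (le_max_left _ _)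
  obtain ⟨m, hm⟩ : ∃ m : ℕ, ((K:ℝ) * R)^m / m.factorial < 1 := by
    have := FloorSemiring.tendsto_pow_div_factorial_atTop ((K:ℝ) * R)
    rcases (Filter.Tendsto.eventually_lt_const one_pos this).exists with ⟨m, hm⟩
    exact ⟨m, hm⟩
  set c : ℝ := ((K:ℝ) * R)^m / m.factorial with hc
  have hc0 : 0 ≤ c := by positivity
  have hlipm : LipschitzWith c.toNNReal (Φ^[m]) := by
    apply LipschitzWith.of_dist_le_mul
    intro y z
    rw [Real.coe_toNNReal _ hc0]
    rw [ContinuousMap.dist_le (by positivity)]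
    intro t
    rw [dist_eq_norm]
    refine (key m y z t).trans ?_
    have h1 : ((K:ℝ) * |(t:ℝ)|)^m ≤ ((K:ℝ)*R)^m := by
      apply pow_le_pow_left₀ (by positivity)
      exact mul_le_mul_of_nonneg_left (hRt t) K.2
    calc dist y z * ((K:ℝ) * |(t:ℝ)|)^m / m.factorial
        ≤ dist y z * ((K:ℝ)*R)^m / m.factorial := by
          gcongr
      _ = c * dist y z := by rw [hc]; ring
  have hcontr : ContractingWith c.toNNReal (Φ^[m]) := by
    constructor
    · exact_mod_cast (Real.coe_toNNReal _ hc0) ▸ hm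
    · exact hlipm
  have : Nonempty C(Set.Icc a b, E) := ⟨ContinuousMap.const _ y0⟩
  set w := hcontr.fixedPoint (Φ^[m]) with hw
  have hwfix : Function.IsFixedPt (Φ^[m]) w := hcontr.fixedPoint_isFixedPt
  have hΦw : Φ w = w := by
    have h1 : Function.IsFixedPt (Φ^[m]) (Φ w) := by
      unfold Function.IsFixedPt
      rw [← Function.iterate_succ_apply Φ m, Function.iterate_succ_apply' Φ m, hwfix]
    rw [hw]
    exact hcontr.fixedPoint_unique h1
  refine ⟨w, fun t => ?_, fun z hz => ?_⟩
  · conv_lhs => rw [← hΦw]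
    exact hΦapply w t
  · have hzfix : Function.IsFixedPt Φ z := by
      unfold Function.IsFixedPt
      ext t
      rw [hΦapply]
      exact (hz t).symm
    have h2 : Function.IsFixedPt (Φ^[m]) z := hzfix.iterate m
    rw [hw]
    exact hcontr.fixedPoint_unique h2


lemma ode_global {E : Type*} [NormedAddCommGroup E] [NormedSpace ℝ E] [CompleteSpace E]
    (f : ℝ → E → E) (hf : Continuous fun p : ℝ × E => f p.1 p.2)
    (K : NNReal) (hlip : ∀ t, LipschitzWith K (f t)) (y0 : E) :
    ∃ y : ℝ → E, y 0 = y0 ∧ ∀ t, HasDerivAt y (f t (y t)) t := by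
  set A : ℕ → ℝ := fun n => -((n:ℝ)+1) with hA
  set B : ℕ → ℝ := fun n => (n:ℝ)+1 with hB
  have hA0 : ∀ n, A n ≤ 0 := fun n => neg_nonpos.mpr (by positivity)
  have hB0 : ∀ n, 0 ≤ B n := fun n => by positivity
  have hAB : ∀ n, A n ≤ B n := fun n => (hA0 n).trans (hB0 n)
  set sol : ∀ n : ℕ, C(Set.Icc (A n) (B n), E) :=
    fun n => (picard_Icc f hf K hlip y0 (A n) (B n) (hA0 n) (hB0 n)).choose with hsol
  have heq : ∀ (n : ℕ) (t : Set.Icc (A n) (B n)),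
      sol n t = y0 + ∫ s in (0:ℝ)..(t:ℝ), f s (sol n (Set.projIcc (A n) (B n) (hAB n) s)) :=
    fun n => (picard_Icc f hf K hlip y0 (A n) (B n) (hA0 n) (hB0 n)).choose_spec.1
  have huniq : ∀ (n : ℕ) (z : C(Set.Icc (A n) (B n), E)),
      (∀ t : Set.Icc (A n) (B n),
        z t = y0 + ∫ s in (0:ℝ)..(t:ℝ), f s (z (Set.projIcc (A n) (B n) (hAB n) s))) →
      z = sol n :=
    fun n => (picard_Icc f hf K hlip y0 (A n) (B n) (hA0 n) (hB0 n)).choose_spec.2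
  have mono : ∀ n m : ℕ, n ≤ m → Set.Icc (A n) (B n) ⊆ Set.Icc (A m) (B m) := by
    intro n m h
    apply Set.Icc_subset_Icc
    · simp only [hA]
      have : (n:ℝ) ≤ m := by exact_mod_cast h
      linarith
    · simp only [hB]
      have : (n:ℝ) ≤ m := by exact_mod_cast h
      linarith
  -- uIcc 0 t within interval
  have huIcc : ∀ (n : ℕ) (t : ℝ), t ∈ Set.Icc (A n) (B n) →
      ∀ s ∈ Set.uIcc 0 t, s ∈ Set.Icc (A n) (B n) := by
    intro n t ht s hs
    rcases hs with ⟨h1, h2⟩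
    constructor
    · exact le_trans (le_min (hA0 n) ht.1) h1
    · exact le_trans h2 (max_le (hB0 n) ht.2)
  have consist : ∀ (n m : ℕ) (h : n ≤ m) (t : ℝ) (ht : t ∈ Set.Icc (A n) (B n)),
      sol m ⟨t, mono n m h ht⟩ = sol n ⟨t, ht⟩ := by
    intro n m h t ht
    set inc : C(Set.Icc (A n) (B n), Set.Icc (A m) (B m)) :=
      ⟨fun u => ⟨(u:ℝ), mono n m h u.2⟩, Continuous.subtype_mk continuous_subtype_val _⟩ with hinc
    set r : C(Set.Icc (A n) (B n), E) := (sol m).comp inc with hr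
    have hreq : ∀ u : Set.Icc (A n) (B n),
        r u = y0 + ∫ s in (0:ℝ)..(u:ℝ), f s (r (Set.projIcc (A n) (B n) (hAB n) s)) := by
      intro u
      have h1 : r u = sol m (inc u) := rfl
      rw [h1, heq m (inc u)]
      have h2 : ((inc u : Set.Icc (A m) (B m)) : ℝ) = (u : ℝ) := rfl
      rw [h2]
      congr 1
      apply intervalIntegral.integral_congr
      intro s hs
      have hsn : s ∈ Set.Icc (A n) (B n) := huIcc n u u.2 s hs
      have hsm : s ∈ Set.Icc (A m) (B m) := mono n m h hsn
      have e1 : Set.projIcc (A m) (B m) (hAB m) s = ⟨s, hsm⟩ := Set.projIcc_of_mem _ hsm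
      have e2 : Set.projIcc (A n) (B n) (hAB n) s = ⟨s, hsn⟩ := Set.projIcc_of_mem _ hsn
      show f s (sol m (Set.projIcc (A m) (B m) (hAB m) s))
          = f s (r (Set.projIcc (A n) (B n) (hAB n) s))
      have h3 : r (Set.projIcc (A n) (B n) (hAB n) s)
          = sol m (inc (Set.projIcc (A n) (B n) (hAB n) s)) := rfl
      rw [h3]
      have h4 : Set.projIcc (A m) (B m) (hAB m) s = inc (Set.projIcc (A n) (B n) (hAB n) s) := by
        rw [e1, e2]
        rfl
      rw [h4]
    have := huniq n r hreq
    calc sol m ⟨t, mono n m h ht⟩ = r ⟨t, ht⟩ := rfl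
      _ = sol n ⟨t, ht⟩ := by rw [this]
  -- global membership
  have hmemceil : ∀ t : ℝ, t ∈ Set.Icc (A ⌈|t|⌉₊) (B ⌈|t|⌉₊) := by
    intro t
    have h := Nat.le_ceil |t|
    have h2 : |t| ≤ (⌈|t|⌉₊:ℝ) + 1 := by linarith
    rcases abs_le.mp h2 with ⟨h3, h4⟩
    exact ⟨by simpa [hA] using h3, by simpa [hB] using h4⟩
  set y : ℝ → E := fun t => sol ⌈|t|⌉₊ ⟨t, hmemceil t⟩ with hy
  have hy_eq_m : ∀ (t : ℝ) (m : ℕ), ⌈|t|⌉₊ ≤ m → ∀ (p : t ∈ Set.Icc (A m) (B m)),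
      y t = sol m ⟨t, p⟩ := by
    intro t m hm p
    exact (consist ⌈|t|⌉₊ m hm t (hmemceil t)).symm
  refine ⟨y, ?_, ?_⟩
  · have h := heq ⌈|(0:ℝ)|⌉₊ ⟨0, hmemceil 0⟩
    simp only [Set.Icc.mk_zero] at h
    simpa using h
  · intro t0
    set m : ℕ := ⌈|t0|⌉₊ + 1 with hm
    set g : ℝ → E := fun s => f s (sol m (Set.projIcc (A m) (B m) (hAB m) s)) with hg
    have hgc : Continuous g :=
      hf.comp (continuous_id.prodMk ((sol m).continuous.comp continuous_projIcc))
    have hY : HasDerivAt (fun u => y0 + ∫ s in (0:ℝ)..u, g s) (g t0) t0 := by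
      apply HasDerivAt.const_add
      exact intervalIntegral.integral_hasDerivAt_right (hgc.intervalIntegrable _ _)
        (hgc.stronglyMeasurable.stronglyMeasurableAtFilter) hgc.continuousAt
    have ht0m : t0 ∈ Set.Icc (A m) (B m) := mono _ _ (Nat.le_succ _) (hmemceil t0)
    have hval : g t0 = f t0 (y t0) := by
      rw [hg]
      simp only
      rw [Set.projIcc_of_mem _ ht0m]
      rw [hy_eq_m t0 m (Nat.le_succ _) ht0m]
    have hEv : (fun u => y0 + ∫ s in (0:ℝ)..u, g s) =ᶠ[nhds t0] y := by
      have habs0 : |t0| < (m:ℝ) := by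
        refine lt_of_le_of_lt (Nat.le_ceil _) ?_
        exact_mod_cast Nat.lt_succ_self ⌈|t0|⌉₊
      have hU : Set.Ioo (-(m:ℝ)) (m:ℝ) ∈ nhds t0 := by
        apply Ioo_mem_nhds
        · linarith [neg_abs_le t0]
        · linarith [le_abs_self t0]
      apply Filter.eventuallyEq_of_mem hU
      intro t ht
      have htabs : |t| ≤ (m:ℝ) := by
        rw [abs_le]
        exact ⟨le_of_lt ht.1, le_of_lt ht.2⟩
      have hcl : ⌈|t|⌉₊ ≤ m := Nat.ceil_le.mpr (by exact_mod_cast htabs)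
      have htm : t ∈ Set.Icc (A m) (B m) := mono _ _ hcl (hmemceil t)
      have h1 : y t = sol m ⟨t, htm⟩ := hy_eq_m t m hcl htm
      rw [h1, heq m ⟨t, htm⟩]
    have := hY.congr_of_eventuallyEq hEv.symm
    rw [hval] at this
    exact this



lemma myMulVec_norm_le (M : Matrix (Fin 3) (Fin 3) ℝ) (w : Fin 3 → ℝ) :
    ‖M *ᵥ w‖ ≤ (∑ i, ∑ j, |M i j|) * ‖w‖ := by
  rw [pi_norm_le_iff_of_nonneg (by positivity)]
  intro i
  have h1 : ‖(M *ᵥ w) i‖ = |∑ j, M i j * w j| := rfl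
  rw [h1]
  calc |∑ j, M i j * w j| ≤ ∑ j, |M i j * w j| := Finset.abs_sum_le_sum_abs _ _
    _ ≤ ∑ j, |M i j| * ‖w‖ := by
        apply Finset.sum_le_sum
        intro j _
        rw [abs_mul]
        refine mul_le_mul_of_nonneg_left ?_ (abs_nonneg _)
        exact (Real.norm_eq_abs (w j)) ▸ norm_le_pi_norm w j
    _ = (∑ j, |M i j|) * ‖w‖ := by rw [Finset.sum_mul]
    _ ≤ (∑ i, ∑ j, |M i j|) * ‖w‖ := by
        refine mul_le_mul_of_nonneg_right ?_ (norm_nonneg _)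
        exact Finset.single_le_sum (f := fun k => ∑ j, |M k j|) (fun k _ => by positivity) (Finset.mem_univ i)

lemma myDot_mulVec_le (M : Matrix (Fin 3) (Fin 3) ℝ) (z : Fin 3 → ℝ) :
    (M *ᵥ z) ⬝ᵥ z ≤ (∑ i, ∑ j, |M i j|) * (z ⬝ᵥ z) := by
  have hzz : ∀ i j, |z i| * |z j| ≤ z ⬝ᵥ z := by
    intro i j
    have hi : z i * z i ≤ z ⬝ᵥ z :=
      Finset.single_le_sum (f := fun k => z k * z k) (fun k _ => mul_self_nonneg _)
        (Finset.mem_univ i)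
    have hj : z j * z j ≤ z ⬝ᵥ z :=
      Finset.single_le_sum (f := fun k => z k * z k) (fun k _ => mul_self_nonneg _)
        (Finset.mem_univ j)
    nlinarith [sq_nonneg (|z i| - |z j|), abs_mul_abs_self (z i), abs_mul_abs_self (z j)]
  have h0 : (M *ᵥ z) ⬝ᵥ z = ∑ i, (M *ᵥ z) i * z i := rfl
  rw [h0]
  calc ∑ i, (M *ᵥ z) i * z i ≤ ∑ i, |(M *ᵥ z) i * z i| :=
        Finset.sum_le_sum fun i _ => le_abs_self _
    _ ≤ ∑ i, ∑ j, |M i j| * (z ⬝ᵥ z) := by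
        apply Finset.sum_le_sum
        intro i _
        have h2 : |(M *ᵥ z) i * z i| = |∑ j, M i j * z j| * |z i| := by
          rw [abs_mul]; rfl
        rw [h2]
        calc |∑ j, M i j * z j| * |z i| ≤ (∑ j, |M i j * z j|) * |z i| := by
              refine mul_le_mul_of_nonneg_right (Finset.abs_sum_le_sum_abs _ _) (abs_nonneg _)
          _ = ∑ j, |M i j| * (|z j| * |z i|) := by
              rw [Finset.sum_mul]
              congr 1; funext j
              rw [abs_mul]; ring
          _ ≤ ∑ j, |M i j| * (z ⬝ᵥ z) := by
              apply Finset.sum_le_sum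
              intro j _
              exact mul_le_mul_of_nonneg_left (hzz j i) (abs_nonneg _)
    _ = (∑ i, ∑ j, |M i j|) * (z ⬝ᵥ z) := by
        rw [Finset.sum_mul]
        congr 1; funext i
        rw [Finset.sum_mul]

lemma so3_entry_abs_le {Vm : Matrix (Fin 3) (Fin 3) ℝ} (h : Vmᵀ * Vm = 1) (i j : Fin 3) :
    |Vm i j| ≤ 1 := by
  have h1 : (Vmᵀ * Vm) j j = 1 := by rw [h]; simp [Matrix.one_apply]
  rw [Matrix.mul_apply] at h1
  simp only [Matrix.transpose_apply] at h1
  rw [abs_le_one_iff_mul_self_le_one, ← h1]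
  exact Finset.single_le_sum (f := fun k => Vm k j * Vm k j)
    (fun k _ => mul_self_nonneg _) (Finset.mem_univ i)

lemma so3_sum_le {Vm : Matrix (Fin 3) (Fin 3) ℝ} (h : Vmᵀ * Vm = 1) :
    (∑ i, ∑ j, |Vm i j|) ≤ 9 := by
  calc (∑ i, ∑ j, |Vm i j|) ≤ ∑ _i : Fin 3, ∑ _j : Fin 3, (1:ℝ) :=
        Finset.sum_le_sum fun i _ => Finset.sum_le_sum fun j _ => so3_entry_abs_le h i j
    _ = 9 := by norm_num

lemma so3T_sum_le {Vm : Matrix (Fin 3) (Fin 3) ℝ} (h : Vmᵀ * Vm = 1) :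
    (∑ i, ∑ j, |Vmᵀ i j|) ≤ 9 := by
  calc (∑ i, ∑ j, |Vmᵀ i j|) ≤ ∑ _i : Fin 3, ∑ _j : Fin 3, (1:ℝ) :=
        Finset.sum_le_sum fun i _ => Finset.sum_le_sum fun j _ => so3_entry_abs_le h j i
    _ = 9 := by norm_num

lemma hasDerivAt_dotP {u v : ℝ → Fin 3 → ℝ} {u' v' : Fin 3 → ℝ} {t : ℝ}
    (hu : HasDerivAt u u' t) (hv : HasDerivAt v v' t) :
    HasDerivAt (fun s => u s ⬝ᵥ v s) (u' ⬝ᵥ v t + u t ⬝ᵥ v') t := by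
  have h := HasDerivAt.sum (u := Finset.univ)
    (A := fun i s => u s i * v s i) (A' := fun i => u' i * v t i + u t i * v' i)
    (fun i _ => (hasDerivAt_pi.mp hu i).mul (hasDerivAt_pi.mp hv i))
  have e : (∑ i, (u' i * v t i + u t i * v' i)) = u' ⬝ᵥ v t + u t ⬝ᵥ v' := by
    simp [dotProduct, Finset.sum_add_distrib]
  rw [e] at h
  exact h

lemma hasDerivAt_mulVecComp {x : ℝ → Fin 3 → ℝ} {x' : Fin 3 → ℝ} {t : ℝ}
    (M : Matrix (Fin 3) (Fin 3) ℝ) (hx : HasDerivAt x x' t) :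
    HasDerivAt (fun s => M *ᵥ x s) (M *ᵥ x') t := by
  rw [hasDerivAt_pi]
  intro i
  exact HasDerivAt.sum (u := Finset.univ) (A := fun j s => M i j * x s j)
    (A' := fun j => M i j * x' j) (fun j _ => (hasDerivAt_pi.mp hx j).const_mul (M i j))

end OdeAux

set_option maxHeartbeats 4000000

/-- **Instability of the linearization around the non-identity equilibria.**
If `Υ` is symmetric, invertible, with at least one strictly positive eigenvalue, and
`V(t) ∈ SO(3)` is continuous, then the origin of
`ẋ = Υx + V(t)ᵀθ`, `θ̇ = 2(k_I/k_p) V(t) Υ x` is unstable: there is `ε > 0` such that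
for every `δ > 0` some solution starting in the `δ`-ball around the origin leaves the
`ε`-ball in finite positive time. -/
theorem linearization_unstable
    (Υ : Matrix (Fin 3) (Fin 3) ℝ) (hΥsymm : Υᵀ = Υ)
    (hΥunit : IsUnit Υ)
    (hΥpos : ∃ μ : ℝ, 0 < μ ∧ ∃ v : Fin 3 → ℝ, v ≠ 0 ∧ Υ *ᵥ v = μ • v)
    (kp kI : ℝ) (hkp : 0 < kp) (hkI : 0 < kI)
    (V : ℝ → Matrix (Fin 3) (Fin 3) ℝ)
    (hV : ∀ t, V t ∈ SO3) (hVcont : Continuous V) :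
    ∃ ε > (0 : ℝ), ∀ δ > (0 : ℝ),
      ∃ x θ : ℝ → Fin 3 → ℝ,
        (∀ t, 0 ≤ t → HasDerivAt x (Υ *ᵥ x t + (V t)ᵀ *ᵥ θ t) t) ∧
        (∀ t, 0 ≤ t → HasDerivAt θ ((2 * (kI / kp)) • (V t *ᵥ (Υ *ᵥ x t))) t) ∧
        ‖(x 0, θ 0)‖ < δ ∧
        ∃ T > (0 : ℝ), ε ≤ ‖(x T, θ T)‖ := by
  classical
  obtain ⟨c, hcdef⟩ : ∃ c : ℝ, c = 2 * (kI / kp) := ⟨_, rfl⟩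
  have hc : 0 < c := by rw [hcdef]; positivity
  have hVorth : ∀ t, (V t)ᵀ * V t = 1 := fun t => (hV t).1
  obtain ⟨SΥ, hSΥdef⟩ : ∃ s : ℝ, s = ∑ i, ∑ j, |Υ i j| := ⟨_, rfl⟩
  have hSΥ0 : 0 ≤ SΥ := by rw [hSΥdef]; positivity
  have hdet : IsUnit Υ.det := (Matrix.isUnit_iff_isUnit_det Υ).mp hΥunit
  obtain ⟨SB, hSBdef⟩ : ∃ s : ℝ, s = ∑ i, ∑ j, |Υ⁻¹ i j| := ⟨_, rfl⟩
  have hSB0 : 0 ≤ SB := by rw [hSBdef]; positivity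
  obtain ⟨lam, hlamdef⟩ : ∃ l : ℝ, l = 2 / (SB + 1) := ⟨_, rfl⟩
  have hlam0 : 0 < lam := by
    rw [hlamdef]
    exact div_pos two_pos (by linarith)
  set f : ℝ → (Fin 3 → ℝ) × (Fin 3 → ℝ) → (Fin 3 → ℝ) × (Fin 3 → ℝ) :=
    fun t p => (Υ *ᵥ p.1 + (V t)ᵀ *ᵥ p.2, c • (V t *ᵥ (Υ *ᵥ p.1))) with hfdef
  have hfc : Continuous fun p : ℝ × ((Fin 3 → ℝ) × (Fin 3 → ℝ)) => f p.1 p.2 := by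
    simp only [hfdef]
    apply Continuous.prodMk
    · apply Continuous.add
      · apply continuous_pi
        intro i
        show Continuous fun p : ℝ × ((Fin 3 → ℝ) × (Fin 3 → ℝ)) => ∑ j, Υ i j * p.2.1 j
        apply continuous_finset_sum
        intro j _
        exact continuous_const.mul ((continuous_apply j).comp (continuous_fst.comp continuous_snd))
      · apply continuous_pi
        intro i
        show Continuous fun p : ℝ × ((Fin 3 → ℝ) × (Fin 3 → ℝ)) => ∑ j, (V p.1) j i * p.2.2 j
        apply continuous_finset_sum
        intro j _
        exact ((hVcont.matrix_elem j i).comp continuous_fst).mul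
          ((continuous_apply j).comp (continuous_snd.comp continuous_snd))
    · apply continuous_pi
      intro i
      show Continuous fun p : ℝ × ((Fin 3 → ℝ) × (Fin 3 → ℝ)) =>
        c * ∑ j, V p.1 i j * ∑ k, Υ j k * p.2.1 k
      apply Continuous.mul continuous_const
      apply continuous_finset_sum
      intro j _
      apply Continuous.mul
      · exact (hVcont.matrix_elem i j).comp continuous_fst
      · apply continuous_finset_sum
        intro k _
        exact continuous_const.mul ((continuous_apply k).comp (continuous_fst.comp continuous_snd))
  obtain ⟨Kr, hKrdef⟩ : ∃ k : ℝ, k = SΥ + 9 + c * (9 * SΥ) + 1 := ⟨_, rfl⟩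
  have h9SΥ : 0 ≤ c * (9 * SΥ) := mul_nonneg hc.le (mul_nonneg (by norm_num) hSΥ0)
  have hKr0 : 0 ≤ Kr := by rw [hKrdef]; linarith
  have hlip : ∀ t, LipschitzWith (Real.toNNReal Kr) (f t) := by
    intro t
    apply LipschitzWith.of_dist_le_mul
    intro p q
    rw [Real.coe_toNNReal _ hKr0, dist_eq_norm, dist_eq_norm]
    have hd1 : ‖p.1 - q.1‖ ≤ ‖p - q‖ := by
      rw [Prod.norm_def]
      exact le_max_left _ _
    have hd2 : ‖p.2 - q.2‖ ≤ ‖p - q‖ := by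
      rw [Prod.norm_def]
      exact le_max_right _ _
    have hVb := so3_sum_le (hVorth t)
    have hVbT := so3T_sum_le (hVorth t)
    have e1 : (f t p).1 - (f t q).1 = Υ *ᵥ (p.1 - q.1) + (V t)ᵀ *ᵥ (p.2 - q.2) := by
      simp only [hfdef, mulVec_sub]
      abel
    have e2 : (f t p).2 - (f t q).2 = c • (V t *ᵥ (Υ *ᵥ (p.1 - q.1))) := by
      simp only [hfdef, mulVec_sub, smul_sub]
    have hn1 : ‖(f t p).1 - (f t q).1‖ ≤ Kr * ‖p - q‖ := by
      rw [e1]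
      have hmA := myMulVec_norm_le Υ (p.1 - q.1)
      rw [← hSΥdef] at hmA
      have hcal : ‖Υ *ᵥ (p.1 - q.1) + (V t)ᵀ *ᵥ (p.2 - q.2)‖
          ≤ SΥ * ‖p.1 - q.1‖ + (∑ i, ∑ j, |(V t)ᵀ i j|) * ‖p.2 - q.2‖ :=
        le_trans (norm_add_le _ _) (add_le_add hmA (myMulVec_norm_le _ _))
      have h2 : SΥ * ‖p.1 - q.1‖ ≤ SΥ * ‖p - q‖ := mul_le_mul_of_nonneg_left hd1 hSΥ0
      have h3 : (∑ i, ∑ j, |(V t)ᵀ i j|) * ‖p.2 - q.2‖ ≤ 9 * ‖p - q‖ :=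
        mul_le_mul hVbT hd2 (norm_nonneg _) (by norm_num)
      have h4 : 0 ≤ (c * (9 * SΥ) + 1) * ‖p - q‖ :=
        mul_nonneg (by linarith) (norm_nonneg _)
      rw [hKrdef]
      nlinarith
    have hn2 : ‖(f t p).2 - (f t q).2‖ ≤ Kr * ‖p - q‖ := by
      rw [e2, norm_smul, Real.norm_eq_abs, abs_of_pos hc]
      have hA := myMulVec_norm_le Υ (p.1 - q.1)
      rw [← hSΥdef] at hA
      have hB := myMulVec_norm_le (V t) (Υ *ᵥ (p.1 - q.1))
      have h5 : ‖V t *ᵥ (Υ *ᵥ (p.1 - q.1))‖ ≤ 9 * (SΥ * ‖p.1 - q.1‖) := by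
        calc ‖V t *ᵥ (Υ *ᵥ (p.1 - q.1))‖
            ≤ (∑ i, ∑ j, |V t i j|) * ‖Υ *ᵥ (p.1 - q.1)‖ := hB
          _ ≤ 9 * (SΥ * ‖p.1 - q.1‖) := mul_le_mul hVb hA (norm_nonneg _) (by norm_num)
      have h7 := mul_le_mul_of_nonneg_left hd1 h9SΥ
      have h8 : 0 ≤ (SΥ + 9 + 1) * ‖p - q‖ := mul_nonneg (by linarith) (norm_nonneg _)
      rw [hKrdef]
      nlinarith [mul_le_mul_of_nonneg_left h5 hc.le]
    rw [Prod.norm_def]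
    simp only [Prod.fst_sub, Prod.snd_sub] at hn1 hn2 ⊢
    exact max_le hn1 hn2
  -- identities
  have hsymdot : ∀ u w : Fin 3 → ℝ, u ⬝ᵥ (Υ *ᵥ w) = (Υ *ᵥ u) ⬝ᵥ w := by
    intro u w
    rw [Matrix.dotProduct_mulVec]
    congr 1
    conv_lhs => rw [← hΥsymm]
    rw [Matrix.vecMul_transpose]
  have hVdot : ∀ (t : ℝ) (θv w : Fin 3 → ℝ), (V t *ᵥ w) ⬝ᵥ θv = ((V t)ᵀ *ᵥ θv) ⬝ᵥ w := by
    intro t θv w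
    rw [dotProduct_comm, Matrix.dotProduct_mulVec]
    congr 1
    have h := Matrix.vecMul_transpose ((V t)ᵀ) θv
    rw [Matrix.transpose_transpose] at h
    exact h
  refine ⟨1, one_pos, ?_⟩
  intro δ hδ
  obtain ⟨μ, hμ, v, hv, hμv⟩ := hΥpos
  obtain ⟨a, hadef⟩ : ∃ a : ℝ, a = δ / (2 * (‖v‖ + 1)) := ⟨_, rfl⟩
  have ha : 0 < a := by
    rw [hadef]
    exact div_pos hδ (by positivity)
  obtain ⟨y, hy0, hdy⟩ := ode_global f hfc (Real.toNNReal Kr) hlip (a • v, 0)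
  set x : ℝ → Fin 3 → ℝ := fun t => (y t).1 with hxdef
  set θ : ℝ → Fin 3 → ℝ := fun t => (y t).2 with hθdef
  have hdx : ∀ t, HasDerivAt x (Υ *ᵥ x t + (V t)ᵀ *ᵥ θ t) t := fun t => (hdy t).fst
  have hdθ : ∀ t, HasDerivAt θ (c • (V t *ᵥ (Υ *ᵥ x t))) t := fun t => (hdy t).snd
  set W : ℝ → ℝ := fun t => x t ⬝ᵥ (Υ *ᵥ x t) - c⁻¹ * (θ t ⬝ᵥ θ t) with hWdef
  have hWd : ∀ t, HasDerivAt W (2 * ((Υ *ᵥ x t) ⬝ᵥ (Υ *ᵥ x t))) t := by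
    intro t
    have hxd := hdx t
    have hθd := hdθ t
    have hzd : HasDerivAt (fun s => Υ *ᵥ x s) (Υ *ᵥ (Υ *ᵥ x t + (V t)ᵀ *ᵥ θ t)) t :=
      hasDerivAt_mulVecComp Υ hxd
    have h1 := hasDerivAt_dotP hxd hzd
    have h2 := hasDerivAt_dotP hθd hθd
    have h3 := h1.sub (h2.const_mul c⁻¹)
    convert h3 using 1
    case e'_4 => rfl
    case e'_5 => rfl
    case e'_8 => rfl
    rw [add_dotProduct, hsymdot (x t), dotProduct_add, smul_dotProduct, dotProduct_smul,
      smul_eq_mul, smul_eq_mul, hVdot t (θ t), dotProduct_comm (θ t), hVdot t (θ t),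
      dotProduct_comm (Υ *ᵥ x t) ((V t)ᵀ *ᵥ θ t)]
    field_simp
    ring
  set G : ℝ → ℝ := fun t => W t * Real.exp (-lam * t) with hGdef
  have hexp : ∀ t : ℝ, HasDerivAt (fun s => Real.exp (-lam * s)) (Real.exp (-lam * t) * (-lam)) t := by
    intro t
    have h1 : HasDerivAt (fun s : ℝ => -lam * s) (-lam) t := by
      simpa using (hasDerivAt_id t).const_mul (-lam)
    exact (Real.hasDerivAt_exp (-lam * t)).comp t h1
  have hGd : ∀ t, HasDerivAt G
      (2 * ((Υ *ᵥ x t) ⬝ᵥ (Υ *ᵥ x t)) * Real.exp (-lam * t)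
        + W t * (Real.exp (-lam * t) * (-lam))) t :=
    fun t => (hWd t).mul (hexp t)
  have hzznn : ∀ t, 0 ≤ (Υ *ᵥ x t) ⬝ᵥ (Υ *ᵥ x t) :=
    fun t => Finset.sum_nonneg fun i _ => mul_self_nonneg _
  have hWleA : ∀ t, W t ≤ x t ⬝ᵥ (Υ *ᵥ x t) := by
    intro t
    have h1 : 0 ≤ θ t ⬝ᵥ θ t := Finset.sum_nonneg fun i _ => mul_self_nonneg _
    have h2 : 0 ≤ c⁻¹ * (θ t ⬝ᵥ θ t) := mul_nonneg (inv_nonneg.mpr hc.le) h1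
    simp only [hWdef]
    linarith
  have hWle : ∀ t, W t ≤ (SB + 1) * ((Υ *ᵥ x t) ⬝ᵥ (Υ *ᵥ x t)) := by
    intro t
    have h2 : x t ⬝ᵥ (Υ *ᵥ x t) = (Υ⁻¹ *ᵥ (Υ *ᵥ x t)) ⬝ᵥ (Υ *ᵥ x t) := by
      rw [Matrix.mulVec_mulVec, Matrix.nonsing_inv_mul Υ hdet, Matrix.one_mulVec]
    have h3 := myDot_mulVec_le Υ⁻¹ (Υ *ᵥ x t)
    have h4 := hzznn t
    have h5 := hWleA t
    rw [← hSBdef] at h3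
    nlinarith
  have hlamSB : lam * (SB + 1) = 2 := by
    rw [hlamdef]
    exact div_mul_cancel₀ 2 (by linarith)
  have hGmono : Monotone G := by
    apply monotone_of_deriv_nonneg
    · exact fun t => (hGd t).differentiableAt
    · intro t
      rw [(hGd t).deriv]
      have he := Real.exp_pos (-lam * t)
      have h5 : lam * W t ≤ 2 * ((Υ *ᵥ x t) ⬝ᵥ (Υ *ᵥ x t)) := by
        have h6 := mul_le_mul_of_nonneg_left (hWle t) hlam0.le
        have h7 : lam * ((SB + 1) * ((Υ *ᵥ x t) ⬝ᵥ (Υ *ᵥ x t)))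
            = 2 * ((Υ *ᵥ x t) ⬝ᵥ (Υ *ᵥ x t)) := by
          rw [← hlamSB]; ring
        linarith
      have h8 := mul_le_mul_of_nonneg_right h5 he.le
      nlinarith [h8]
  have hx0 : x 0 = a • v := by rw [hxdef]; simp [hy0]
  have hθ0 : θ 0 = 0 := by rw [hθdef]; simp [hy0]
  have hvv : 0 < v ⬝ᵥ v := by
    rcases (Finset.sum_nonneg fun i _ => mul_self_nonneg (v i) : 0 ≤ v ⬝ᵥ v).lt_or_eq with h | h
    · exact h
    · exact absurd (dotProduct_self_eq_zero.mp h.symm) hv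
  have hW0 : W 0 = a ^ 2 * μ * (v ⬝ᵥ v) := by
    simp only [hWdef]
    rw [hx0, hθ0, Matrix.mulVec_smul, hμv]
    simp [smul_dotProduct, dotProduct_smul, smul_eq_mul]
    ring
  have hW0pos : 0 < W 0 := by
    rw [hW0]
    exact mul_pos (mul_pos (pow_pos ha 2) hμ) hvv
  have hnorm0 : ‖(x 0, θ 0)‖ < δ := by
    rw [hx0, hθ0, Prod.norm_def]
    simp only [norm_zero, norm_smul, Real.norm_eq_abs, abs_of_pos ha]
    rw [max_eq_left (mul_nonneg ha.le (norm_nonneg v))]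
    rw [hadef, div_mul_eq_mul_div, div_lt_iff₀ (by positivity)]
    nlinarith [norm_nonneg v]
  obtain ⟨Cq, hCqdef⟩ : ∃ q : ℝ, q = 3 * (SΥ + 1) / W 0 := ⟨_, rfl⟩
  have hCq0 : 0 < Cq := by
    rw [hCqdef]
    exact div_pos (by linarith) hW0pos
  obtain ⟨T, hTdef⟩ : ∃ T : ℝ, T = (|Real.log Cq| + 1) / lam := ⟨_, rfl⟩
  have hT0 : 0 < T := by
    rw [hTdef]
    exact div_pos (by positivity) hlam0
  have hlamT : lam * T = |Real.log Cq| + 1 := by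
    rw [hTdef]
    rw [mul_div_cancel₀ _ hlam0.ne']
  have hexpT : Cq ≤ Real.exp (lam * T) := by
    rw [← Real.exp_log hCq0]
    apply Real.exp_le_exp.mpr
    rw [hlamT]
    linarith [le_abs_self (Real.log Cq)]
  have hG0T : W 0 ≤ W T * Real.exp (-lam * T) := by
    have h := hGmono hT0.le
    simp only [hGdef] at h
    simpa using h
  have hWT : 3 * (SΥ + 1) ≤ W T := by
    have h1 : W 0 * Real.exp (lam * T) ≤ W T := by
      have h2 := mul_le_mul_of_nonneg_right hG0T (Real.exp_pos (lam * T)).le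
      have h3 : W T * Real.exp (-lam * T) * Real.exp (lam * T) = W T := by
        rw [mul_assoc, ← Real.exp_add]
        have h4 : -lam * T + lam * T = 0 := by ring
        rw [h4, Real.exp_zero, mul_one]
      rw [h3] at h2
      exact h2
    have h5 : 3 * (SΥ + 1) = W 0 * Cq := by
      rw [hCqdef, mul_div_assoc']
      rw [mul_comm (W 0) (3 * (SΥ + 1)), mul_div_assoc, div_self hW0pos.ne', mul_one]
    have h6 : W 0 * Cq ≤ W 0 * Real.exp (lam * T) := mul_le_mul_of_nonneg_left hexpT hW0pos.le
    linarith
  rw [hcdef] at hdθ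
  refine ⟨x, θ, fun t _ => hdx t, fun t _ => hdθ t, hnorm0, T, hT0, ?_⟩
  have hxxnn : 0 ≤ x T ⬝ᵥ x T := Finset.sum_nonneg fun i _ => mul_self_nonneg _
  have h5 : x T ⬝ᵥ (Υ *ᵥ x T) ≤ (SΥ + 1) * (x T ⬝ᵥ x T) := by
    rw [dotProduct_comm]
    have hdd := myDot_mulVec_le Υ (x T)
    rw [← hSΥdef] at hdd
    linarith
  have h7 : x T ⬝ᵥ x T ≤ 3 * (‖x T‖ * ‖x T‖) := by
    have h8 : ∀ i, x T i * x T i ≤ ‖x T‖ * ‖x T‖ := by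
      intro i
      have h := norm_le_pi_norm (x T) i
      rw [Real.norm_eq_abs] at h
      nlinarith [abs_nonneg (x T i), abs_mul_abs_self (x T i), norm_nonneg (x T)]
    have h9 : x T ⬝ᵥ x T = ∑ i, x T i * x T i := rfl
    rw [h9]
    calc ∑ i, x T i * x T i ≤ ∑ _i : Fin 3, ‖x T‖ * ‖x T‖ :=
          Finset.sum_le_sum fun i _ => h8 i
      _ = 3 * (‖x T‖ * ‖x T‖) := by
          rw [Finset.sum_const]
          simp
  have h10 : 1 ≤ ‖x T‖ * ‖x T‖ := by
    nlinarith [hWT, h5, hWleA T, h7, hSΥ0]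
  have h11 : 1 ≤ ‖x T‖ := by
    nlinarith [norm_nonneg (x T)]
  calc (1:ℝ) ≤ ‖x T‖ := h11
    _ ≤ ‖(x T, θ T)‖ := by
        rw [Prod.norm_def]
        exact le_max_left _ _
end
end

section
/- Let y_1, …, y_ν ∈ ℝ³ be such that at least two of them are linearly independent. Then the symmetric matrix −Σ_{i=1}^{ν} y_{i×} y_{i×} = Σ_{i=1}^{ν} ( ‖y_i‖² I₃ − y_i y_iᵀ ) is positive definite. -/
open Matrix

noncomputable section

lemma skew3_sq (v : Fin 3 → ℝ) :
    -(skew3 v * skew3 v) = (v ⬝ᵥ v) • (1 : Matrix (Fin 3) (Fin 3) ℝ) - vecMulVec v v := by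
  ext i j
  fin_cases i <;> fin_cases j <;>
    simp [skew3, mul_apply, vecMulVec_apply, dotProduct, Fin.sum_univ_three, Matrix.one_apply] <;>
    ring

lemma herm_aux (v : Fin 3 → ℝ) :
    ((v ⬝ᵥ v) • (1 : Matrix (Fin 3) (Fin 3) ℝ) - vecMulVec v v).IsHermitian := by
  unfold Matrix.IsHermitian
  ext i j
  rcases eq_or_ne i j with rfl | h
  · simp [conjTranspose_apply, vecMulVec_apply, mul_comm]
  · simp [conjTranspose_apply, vecMulVec_apply, Matrix.one_apply, h, Ne.symm h, mul_comm]

lemma sum_mulVec_aux {n : ℕ} (A : Fin n → Matrix (Fin 3) (Fin 3) ℝ) (x : Fin 3 → ℝ) :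
    (∑ i, A i) *ᵥ x = ∑ i, (A i *ᵥ x) := by
  funext k
  simp only [mulVec, dotProduct, Matrix.sum_apply, Finset.sum_apply, Finset.sum_mul]
  rw [Finset.sum_comm]

lemma dotProduct_sum_aux {n : ℕ} (x : Fin 3 → ℝ) (f : Fin n → Fin 3 → ℝ) :
    x ⬝ᵥ (∑ i, f i) = ∑ i, x ⬝ᵥ f i := by
  simp only [dotProduct, Finset.sum_apply, Finset.mul_sum]
  exact Finset.sum_comm

lemma isHermitian_sum_aux {n : ℕ} (A : Fin n → Matrix (Fin 3) (Fin 3) ℝ)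
    (h : ∀ i, (A i).IsHermitian) : (∑ i, A i).IsHermitian := by
  show (∑ i, A i)ᴴ = ∑ i, A i
  rw [conjTranspose_sum]
  exact Finset.sum_congr rfl fun i _ => h i

lemma qf_aux (v x : Fin 3 → ℝ) :
    x ⬝ᵥ (((v ⬝ᵥ v) • (1 : Matrix (Fin 3) (Fin 3) ℝ) - vecMulVec v v) *ᵥ x)
      = (v ⬝ᵥ v) * (x ⬝ᵥ x) - (v ⬝ᵥ x) ^ 2 := by
  simp [mulVec, vecMulVec_apply, dotProduct, Fin.sum_univ_three, Matrix.one_apply]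
  ring

lemma cs_aux (v x : Fin 3 → ℝ) : (v ⬝ᵥ x) ^ 2 ≤ (v ⬝ᵥ v) * (x ⬝ᵥ x) := by
  simp only [dotProduct, Fin.sum_univ_three]
  nlinarith [sq_nonneg (v 0 * x 1 - v 1 * x 0), sq_nonneg (v 0 * x 2 - v 2 * x 0),
    sq_nonneg (v 1 * x 2 - v 2 * x 1)]

lemma collin_aux (v x : Fin 3 → ℝ) (hx : x ≠ 0)
    (h : (v ⬝ᵥ v) * (x ⬝ᵥ x) - (v ⬝ᵥ x) ^ 2 = 0) : ∃ a : ℝ, v = a • x := by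
  have hc : x ⬝ᵥ x ≠ 0 := fun h0 => hx (dotProduct_self_eq_zero.mp h0)
  set c := x ⬝ᵥ x with hcdef
  set b := v ⬝ᵥ x with hbdef
  have hw : (c • v - b • x) ⬝ᵥ (c • v - b • x) = 0 := by
    simp only [sub_dotProduct, dotProduct_sub, smul_dotProduct, dotProduct_smul, smul_eq_mul,
      ← hcdef, ← hbdef, dotProduct_comm x v, ← hbdef]
    linear_combination c * h
  have hw0 : c • v = b • x := sub_eq_zero.mp (dotProduct_self_eq_zero.mp hw)
  refine ⟨b / c, ?_⟩
  funext k
  have := congrFun hw0 k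
  simp only [Pi.smul_apply, smul_eq_mul] at this ⊢
  field_simp
  linarith

/-- **Positive definiteness of `−Σ yᵢ× yᵢ×`.**
If at least two of the `yᵢ ∈ ℝ³` are linearly independent, then
`−Σᵢ yᵢ× yᵢ× = Σᵢ (‖yᵢ‖² I₃ − yᵢ yᵢᵀ)` is positive definite. -/
theorem neg_sum_skew_sq_posDef
    (ν : ℕ) (y : Fin ν → Fin 3 → ℝ)
    (hindep : ∃ i j : Fin ν, LinearIndependent ℝ ![y i, y j]) :
    (-∑ i, skew3 (y i) * skew3 (y i) =
      ∑ i, ((y i ⬝ᵥ y i) • (1 : Matrix (Fin 3) (Fin 3) ℝ) - vecMulVec (y i) (y i))) ∧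
    (-∑ i, skew3 (y i) * skew3 (y i)).PosDef := by
  have heq : -∑ i, skew3 (y i) * skew3 (y i) =
      ∑ i, ((y i ⬝ᵥ y i) • (1 : Matrix (Fin 3) (Fin 3) ℝ) - vecMulVec (y i) (y i)) := by
    rw [← Finset.sum_neg_distrib]
    exact Finset.sum_congr rfl fun i _ => skew3_sq (y i)
  refine ⟨heq, ?_⟩
  rw [heq]
  refine posDef_iff_dotProduct_mulVec.mpr ⟨?_, ?_⟩
  · exact isHermitian_sum_aux _ fun i => herm_aux (y i)
  · intro x hx
    have hterm : ∀ i : Fin ν, 0 ≤ (y i ⬝ᵥ y i) * (x ⬝ᵥ x) - (y i ⬝ᵥ x) ^ 2 :=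
      fun i => sub_nonneg.mpr (cs_aux (y i) x)
    have hexp : star x ⬝ᵥ ((∑ i, ((y i ⬝ᵥ y i) • (1 : Matrix (Fin 3) (Fin 3) ℝ)
        - vecMulVec (y i) (y i))) *ᵥ x)
        = ∑ i, ((y i ⬝ᵥ y i) * (x ⬝ᵥ x) - (y i ⬝ᵥ x) ^ 2) := by
      rw [sum_mulVec_aux, dotProduct_sum_aux]
      simp only [star_trivial]
      exact Finset.sum_congr rfl fun i _ => qf_aux (y i) x
    simp only [RCLike.re_to_real, hexp]
    by_contra hcon
    push_neg at hcon
    have hsum0 : ∑ i, ((y i ⬝ᵥ y i) * (x ⬝ᵥ x) - (y i ⬝ᵥ x) ^ 2) = 0 :=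
      le_antisymm hcon (Finset.sum_nonneg fun i _ => hterm i)
    have hall : ∀ i : Fin ν, (y i ⬝ᵥ y i) * (x ⬝ᵥ x) - (y i ⬝ᵥ x) ^ 2 = 0 := by
      intro i
      have := (Finset.sum_eq_zero_iff_of_nonneg (fun i _ => hterm i)).mp hsum0
      exact this i (Finset.mem_univ i)
    obtain ⟨i, j, hij⟩ := hindep
    obtain ⟨a, ha⟩ := collin_aux (y i) x hx (hall i)
    obtain ⟨b, hb⟩ := collin_aux (y j) x hx (hall j)
    have hcomb : ∑ k, (![b, -a] k) • (![y i, y j] k) = 0 := by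
      simp [Fin.sum_univ_two, ha, hb, smul_smul]
      module
    have := Fintype.linearIndependent_iff.mp hij ![b, -a] hcomb
    have hb0 : b = 0 := this 0
    have ha0 : a = 0 := by have := this 1; simpa using this
    have : y i ≠ 0 := hij.ne_zero 0
    apply this
    rw [ha, ha0, zero_smul]
end
end
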